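/- Fix ρ_p > 0 and a > 0. For each R > 0 with πR² ≥ a, let n_R = ⌈π ρ_p R²⌉, let S_R be a Borel subset of the closed disk B(0,R) ⊂ ℝ² with two-dimensional Lebesgue measure a, let X_2, …, X_{n_R} be i.i.d. random points uniformly distributed on B(0,R), and let M_1, …, M_{n_R} be i.i.d. random variables uniformly distributed on [0,1], independent of the positions. Then lim_{R→∞} Pr( M_1 < M_j for every j ∈ {2,…,n_R} with X_j ∈ S_R ) = (1 − e^{−ρ_p a}) / (ρ_p a). -/

import Mathlib

open MeasureTheory ProbabilityTheory Set Real Filter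

/-- The uniform probability measure on the closed disk of radius `R` centered at the
origin of the plane. -/
noncomputable def unifDisk (R : ℝ) : Measure (EuclideanSpace ℝ (Fin 2)) :=
  (volume (Metric.closedBall (0 : EuclideanSpace ℝ (Fin 2)) R))⁻¹ •
    volume.restrict (Metric.closedBall (0 : EuclideanSpace ℝ (Fin 2)) R)

/-- The uniform probability measure on `[0,1]`. -/
noncomputable def unifUnit : Measure ℝ := volume.restrict (Set.Icc (0:ℝ) 1)

instance : IsProbabilityMeasure unifUnit := by
  constructor; simp [unifUnit, Real.volume_Icc]

lemma unifUnit_Iic (t : ℝ) : unifUnit (Iic t) = ENNReal.ofReal (min t 1) := by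
  rw [unifUnit, Measure.restrict_apply measurableSet_Iic]
  have h : Iic t ∩ Icc (0:ℝ) 1 = Icc 0 (min t 1) := by
    ext x; simp [mem_Icc, le_min_iff]; tauto
  rw [h, Real.volume_Icc]; simp

lemma joint_pi {Ω : Type} [MeasurableSpace Ω] {P : Measure Ω} [IsProbabilityMeasure P]
    {n : ℕ} {E : Type} [MeasurableSpace E] {Y : Fin n → Ω → E}
    (hY : ∀ i, Measurable (Y i))
    (hind : iIndepFun Y P) :
    P.map (fun ω i => Y i ω) = Measure.pi (fun i => P.map (Y i)) := by
  haveI : ∀ i, IsProbabilityMeasure (P.map (Y i)) :=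
    fun i => Measure.isProbabilityMeasure_map (hY i).aemeasurable
  refine (Measure.pi_eq fun s hs => ?_).symm
  rw [Measure.map_apply (measurable_pi_lambda _ hY) (MeasurableSet.univ_pi hs)]
  have hset : (fun ω i => Y i ω) ⁻¹' (Set.pi univ s) = ⋂ i ∈ Finset.univ, Y i ⁻¹' s i := by
    ext ω; simp [Set.mem_pi]
  rw [hset, hind.measure_inter_preimage_eq_mul Finset.univ (fun i _ => hs i)]
  exact Finset.prod_congr rfl fun i _ => (Measure.map_apply (hY i) (hs i)).symm

lemma key {Ω : Type} [MeasurableSpace Ω] (P : Measure Ω) [IsProbabilityMeasure P]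
    {E : Type} [MeasurableSpace E] (μ1 : Measure E) [IsProbabilityMeasure μ1]
    (S : Set E) (hS : MeasurableSet S)
    {n : ℕ} (hn : 0 < n)
    (X : Fin n → Ω → E) (M : Fin n → Ω → ℝ)
    (hmX : ∀ i, Measurable (X i)) (hmM : ∀ i, Measurable (M i))
    (hind : iIndepFun (fun i ω => (X i ω, M i ω)) P)
    (hlaw : ∀ i, P.map (fun ω => (X i ω, M i ω)) = μ1.prod unifUnit) :
    P {ω | ∀ j : Fin n, j ≠ ⟨0, hn⟩ → X j ω ∈ S → M ⟨0, hn⟩ ω < M j ω}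
      = ∫⁻ t in Icc (0:ℝ) 1, (1 - μ1 S * ENNReal.ofReal t) ^ (n - 1) := by
  set z : Fin n := ⟨0, hn⟩ with hzdef
  set μ : Measure (E × ℝ) := μ1.prod unifUnit with hμdef
  haveI : IsProbabilityMeasure μ := by rw [hμdef]; infer_instance
  set Y : Fin n → Ω → E × ℝ := fun i ω => (X i ω, M i ω) with hYdef
  have hY : ∀ i, Measurable (Y i) := fun i => (hmX i).prodMk (hmM i)
  have hmap : P.map (fun ω i => Y i ω) = Measure.pi (fun _ : Fin n => μ) := by
    rw [joint_pi hY hind]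
    exact congrArg Measure.pi (funext fun i => hlaw i)
  set T : Set (Fin n → E × ℝ) := {y | ∀ j, j ≠ z → (y j).1 ∈ S → (y z).2 < (y j).2} with hTdef
  have hTm : MeasurableSet T := by
    have h : T = ⋂ j, ⋂ (_ : j ≠ z),
        ({y : Fin n → E × ℝ | (y j).1 ∈ S}ᶜ ∪ {y | (y z).2 < (y j).2}) := by
      ext y
      simp only [hTdef, mem_setOf_eq, mem_iInter, mem_union, mem_compl_iff]
      refine forall_congr' fun j => forall_congr' fun hj => ?_
      by_cases h : (y j).1 ∈ S <;> simp [h]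
    rw [h]
    refine MeasurableSet.iInter fun j => MeasurableSet.iInter fun hj => ?_
    exact (((measurable_pi_apply j).fst hS).compl).union
      (measurableSet_lt ((measurable_pi_apply z).snd) ((measurable_pi_apply j).snd))
  have h1 : P {ω | ∀ j : Fin n, j ≠ z → X j ω ∈ S → M z ω < M j ω}
      = (Measure.pi fun _ : Fin n => μ) T := by
    rw [← hmap, Measure.map_apply (measurable_pi_lambda _ hY) hTm]
    rfl
  rw [h1]
  set A' : Set ((∀ _ : {i : Fin n // i = z}, E × ℝ) × (∀ _ : {i : Fin n // ¬ i = z}, E × ℝ)) :=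
    {q | ∀ j, (q.2 j).1 ∈ S → (q.1 ⟨z, rfl⟩).2 < (q.2 j).2} with hA'def
  have hA'm : MeasurableSet A' := by
    have h : A' = ⋂ j : {i : Fin n // ¬ i = z},
        ({q : (∀ _ : {i : Fin n // i = z}, E × ℝ) × (∀ _ : {i : Fin n // ¬ i = z}, E × ℝ) |
            ((q.2 j).1 ∈ S)}ᶜ ∪ {q | (q.1 ⟨z, rfl⟩).2 < (q.2 j).2}) := by
      ext q
      simp only [hA'def, mem_setOf_eq, mem_iInter, mem_union, mem_compl_iff]
      refine forall_congr' fun j => ?_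
      by_cases h : (q.2 j).1 ∈ S <;> simp [h]
    rw [h]
    refine MeasurableSet.iInter fun j => ?_
    exact ((((measurable_pi_apply j).comp measurable_snd).fst hS).compl).union
      (measurableSet_lt (((measurable_pi_apply (⟨z, rfl⟩ : {i : Fin n // i = z})).comp measurable_fst).snd)
        (((measurable_pi_apply j).comp measurable_snd).snd))
  have hTA : T = (MeasurableEquiv.piEquivPiSubtypeProd (fun _ : Fin n => E × ℝ)
      (fun i => i = z)) ⁻¹' A' := by
    ext y
    simp only [hTdef, hA'def, mem_setOf_eq, mem_preimage,
      MeasurableEquiv.piEquivPiSubtypeProd_apply, Equiv.piEquivPiSubtypeProd_apply]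
    constructor
    · exact fun h j => h j.1 j.2
    · exact fun h j hj => h ⟨j, hj⟩
  have hpres := MeasureTheory.measurePreserving_piEquivPiSubtypeProd
    (fun _ : Fin n => μ) (fun i : Fin n => i = z)
  have h2 := hpres.measure_preimage hA'm.nullMeasurableSet
  rw [hTA, h2, Measure.prod_apply hA'm]
  have hcard : Fintype.card {i : Fin n // ¬ i = z} = n - 1 := by
    simp [Fintype.card_subtype_compl, Fintype.card_subtype_eq]
  have hBall : ∀ t : ℝ, μ {w : E × ℝ | w.1 ∈ S → t < w.2}
      = 1 - μ1 S * ENNReal.ofReal (min t 1) := by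
    intro t
    have hc : {w : E × ℝ | w.1 ∈ S → t < w.2} = (S ×ˢ Iic t)ᶜ := by
      ext w; by_cases h : w.1 ∈ S <;> simp [h, not_lt, Set.mem_prod]
    rw [hc, prob_compl_eq_one_sub (hS.prod measurableSet_Iic), hμdef, Measure.prod_prod,
      unifUnit_Iic]
  have hsec : ∀ u, Prod.mk u ⁻¹' A' = Set.pi univ
      (fun _ : {i : Fin n // ¬ i = z} => {w : E × ℝ | w.1 ∈ S → (u ⟨z, rfl⟩).2 < w.2}) := by
    intro u; ext v; simp [hA'def, Set.mem_pi]
  have hstep : ∀ u, (Measure.pi fun _ : {i : Fin n // ¬ i = z} => μ) (Prod.mk u ⁻¹' A')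
      = (1 - μ1 S * ENNReal.ofReal (min ((u ⟨z, rfl⟩).2) 1)) ^ (n - 1) := by
    intro u
    rw [hsec u, Measure.pi_pi, Finset.prod_const, Finset.card_univ, hcard, hBall]
  rw [lintegral_congr hstep]
  have hG : Measurable (fun w : E × ℝ => (1 - μ1 S * ENNReal.ofReal (min w.2 1)) ^ (n - 1)) := by
    refine Measurable.pow_const ?_ _
    exact measurable_const.sub (measurable_const.mul
      (ENNReal.measurable_ofReal.comp (measurable_snd.min measurable_const)))
  have hfinal : ∀ (F : Fintype {i : Fin n // i = z}),
      (∫⁻ u : {i : Fin n // i = z} → E × ℝ,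
        (1 - μ1 S * ENNReal.ofReal (min ((u ⟨z, rfl⟩).2) 1)) ^ (n - 1)
        ∂(@Measure.pi _ _ F _ fun _ => μ))
      = ∫⁻ t in Icc (0:ℝ) 1, (1 - μ1 S * ENNReal.ofReal t) ^ (n - 1) := by
    intro F
    have hpu : MeasurePreserving
        (⇑(MeasurableEquiv.piUnique (fun _ : {i : Fin n // i = z} => E × ℝ)))
        (@Measure.pi _ _ F _ (fun _ => μ)) μ := measurePreserving_piUnique _
    have h4 : (∫⁻ u : {i : Fin n // i = z} → E × ℝ,
        (1 - μ1 S * ENNReal.ofReal (min ((u ⟨z, rfl⟩).2) 1)) ^ (n - 1)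
        ∂(@Measure.pi _ _ F _ fun _ => μ))
        = ∫⁻ w : E × ℝ, (1 - μ1 S * ENNReal.ofReal (min w.2 1)) ^ (n - 1) ∂μ := by
      rw [← hpu.lintegral_comp hG]
      exact lintegral_congr fun u => rfl
    have h5 : (∫⁻ w : E × ℝ, (1 - μ1 S * ENNReal.ofReal (min w.2 1)) ^ (n - 1) ∂μ)
        = ∫⁻ t : ℝ, (1 - μ1 S * ENNReal.ofReal (min t 1)) ^ (n - 1) ∂unifUnit := by
      have hsnd : μ.map Prod.snd = unifUnit := by
        rw [hμdef, Measure.map_snd_prod, measure_univ, one_smul]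
      rw [← hsnd, lintegral_map ?_ measurable_snd]
      exact Measurable.pow_const (measurable_const.sub (measurable_const.mul
        (ENNReal.measurable_ofReal.comp (measurable_id.min measurable_const)))) _
    rw [h4, h5]
    rw [show (unifUnit : Measure ℝ) = volume.restrict (Icc (0:ℝ) 1) from rfl]
    refine setLIntegral_congr_fun measurableSet_Icc (fun t ht => ?_)
    rw [min_eq_left ht.2]
  exact hfinal _

lemma ftc_pow (p : ℝ) (hp0 : 0 < p) (k : ℕ) :
    ∫ t in Icc (0:ℝ) 1, (1 - p*t)^k = (1 - (1-p)^(k+1))/(p*((k:ℝ)+1)) := by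
  rw [MeasureTheory.integral_Icc_eq_integral_Ioc,
    ← intervalIntegral.integral_of_le zero_le_one]
  have hderiv : ∀ t ∈ Set.uIcc (0:ℝ) 1,
      HasDerivAt (fun t => (1 - p*t)^(k+1) * (-(p*((k:ℝ)+1))⁻¹)) ((1 - p*t)^k) t := by
    intro t _
    have h1 : HasDerivAt (fun t : ℝ => 1 - p*t) (-p) t := by
      simpa using ((hasDerivAt_id t).const_mul p).const_sub 1
    have h2 := (h1.pow (k+1)).mul_const (-(p*((k:ℝ)+1))⁻¹)
    refine h2.congr_deriv ?_
    have hne : p*((k:ℝ)+1) ≠ 0 := by positivity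
    rw [Nat.add_sub_cancel]; push_cast
    field_simp
  rw [intervalIntegral.integral_eq_sub_of_hasDerivAt hderiv
    (Continuous.intervalIntegrable (by continuity) _ _)]
  have hne : p*((k:ℝ)+1) ≠ 0 := by positivity
  field_simp
  ring

lemma lint_eval (p : ℝ) (hp0 : 0 < p) (hp1 : p ≤ 1) (k : ℕ) :
    (∫⁻ t in Icc (0:ℝ) 1, (1 - ENNReal.ofReal p * ENNReal.ofReal t) ^ k)
      = ENNReal.ofReal ((1 - (1-p)^(k+1))/(p*((k:ℝ)+1))) := by
  have h1 : (∫⁻ t in Icc (0:ℝ) 1, (1 - ENNReal.ofReal p * ENNReal.ofReal t) ^ k)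
      = ∫⁻ t in Icc (0:ℝ) 1, ENNReal.ofReal ((1 - p*t)^k) := by
    refine setLIntegral_congr_fun measurableSet_Icc (fun t ht => ?_)
    have hpt : 0 ≤ p * t := mul_nonneg hp0.le ht.1
    have h1pt : 0 ≤ 1 - p * t := by nlinarith [ht.2]
    rw [ENNReal.ofReal_pow h1pt, ENNReal.ofReal_sub 1 hpt, ENNReal.ofReal_one,
      ENNReal.ofReal_mul hp0.le]
  rw [h1, ← MeasureTheory.ofReal_integral_eq_lintegral_ofReal, ftc_pow p hp0 k]
  · exact Continuous.integrableOn_Icc (by continuity)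
  · refine (ae_restrict_iff' measurableSet_Icc).2 (ae_of_all _ fun t ht => ?_)
    have : 0 ≤ 1 - p * t := by nlinarith [ht.1, ht.2, hp0.le]
    positivity

lemma vol_disk (R : ℝ) (hR : 0 ≤ R) :
    volume (Metric.closedBall (0 : EuclideanSpace ℝ (Fin 2)) R)
      = ENNReal.ofReal (π * R^2) := by
  rw [EuclideanSpace.volume_closedBall]
  have hcard : (Fintype.card (Fin 2)) = 2 := by simp
  rw [hcard]
  have hg : Real.Gamma (((2:ℕ):ℝ)/2 + 1) = 1 := by
    rw [show ((2:ℕ):ℝ)/2 + 1 = ((1:ℕ):ℝ) + 1 by norm_num, Real.Gamma_nat_eq_factorial]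
    simp
  have hs : Real.sqrt π ^ 2 = π := Real.sq_sqrt pi_pos.le
  rw [hg, hs, ← ENNReal.ofReal_pow hR, ← ENNReal.ofReal_mul (by positivity)]
  norm_num [mul_comm]

lemma unifDisk_prob (R : ℝ) (hR : 0 < R) : IsProbabilityMeasure (unifDisk R) := by
  constructor
  rw [unifDisk, Measure.smul_apply, Measure.restrict_apply_univ, smul_eq_mul,
    vol_disk R hR.le]
  rw [ENNReal.inv_mul_cancel (by simp [ENNReal.ofReal_pos]; positivity) ENNReal.ofReal_ne_top]

lemma unifDisk_apply (R : ℝ) (hR : 0 < R) (S : Set (EuclideanSpace ℝ (Fin 2)))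
    (hSm : MeasurableSet S) (hsub : S ⊆ Metric.closedBall 0 R) {a : ℝ} (ha : 0 < a)
    (hvol : (volume S).toReal = a) :
    unifDisk R S = ENNReal.ofReal (a / (π * R^2)) := by
  have hfin : volume S ≠ ⊤ := by
    refine ne_top_of_le_ne_top ?_ (measure_mono hsub)
    rw [vol_disk R hR.le]; exact ENNReal.ofReal_ne_top
  have hvS : volume S = ENNReal.ofReal a := by
    rw [← hvol, ENNReal.ofReal_toReal hfin]
  rw [unifDisk, Measure.smul_apply, Measure.restrict_apply hSm,
    Set.inter_eq_left.mpr hsub, smul_eq_mul, vol_disk R hR.le, hvS,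
    ← ENNReal.ofReal_inv_of_pos (by positivity), ← ENNReal.ofReal_mul (by positivity)]
  rw [inv_mul_eq_div]

lemma limit_part (ρp a : ℝ) (hρp : 0 < ρp) (ha : 0 < a) (nR : ℝ → ℕ)
    (hnR : ∀ R : ℝ, nR R = ⌈π * ρp * R ^ 2⌉₊) :
    Tendsto (fun R : ℝ =>
        (1 - (1 - a/(π*R^2))^(nR R))/(a/(π*R^2) * (nR R : ℝ)))
      atTop (nhds ((1 - Real.exp (-(ρp * a))) / (ρp * a))) := by
  set q : ℝ → ℝ := fun R => a/(π*R^2) with hqdef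
  have hg : Tendsto (fun R : ℝ => π*R^2) atTop atTop := by
    exact (tendsto_pow_atTop two_ne_zero).const_mul_atTop pi_pos
  have hq0 : Tendsto q atTop (nhds 0) := tendsto_const_nhds.div_atTop hg
  have hqpos : ∀ᶠ R : ℝ in atTop, 0 < q R := by
    filter_upwards [eventually_ge_atTop (1:ℝ)] with R hR
    have : 0 < R := by linarith
    positivity
  have hqlt1 : ∀ᶠ R : ℝ in atTop, q R < 1 := hq0.eventually_lt_const one_pos
  have hden : Tendsto (fun R : ℝ => q R * (nR R : ℝ)) atTop (nhds (ρp * a)) := by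
    have hup : Tendsto (fun R : ℝ => ρp * a + q R) atTop (nhds (ρp * a)) := by
      have := (tendsto_const_nhds :
        Tendsto (fun _ : ℝ => ρp * a) atTop (nhds (ρp * a))).add hq0
      simpa using this
    refine tendsto_of_tendsto_of_tendsto_of_le_of_le' tendsto_const_nhds hup ?_ ?_
    · filter_upwards [eventually_ge_atTop (1:ℝ)] with R hR
      have hR0 : 0 < R := by linarith
      have hq : 0 < q R := by rw [hqdef]; positivity
      have h1 : π * ρp * R^2 ≤ (nR R : ℝ) := by rw [hnR]; exact Nat.le_ceil _
      have h2 : q R * (π * ρp * R^2) = ρp * a := by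
        rw [hqdef]; field_simp
      calc ρp * a = q R * (π * ρp * R^2) := h2.symm
        _ ≤ q R * (nR R : ℝ) := mul_le_mul_of_nonneg_left h1 hq.le
    · filter_upwards [eventually_ge_atTop (1:ℝ)] with R hR
      have hR0 : 0 < R := by linarith
      have hq : 0 < q R := by rw [hqdef]; positivity
      have h1 : (nR R : ℝ) ≤ π * ρp * R^2 + 1 := by
        rw [hnR]; exact (Nat.ceil_lt_add_one (by positivity)).le
      have h2 : q R * (π * ρp * R^2) = ρp * a := by
        rw [hqdef]; field_simp
      calc q R * (nR R : ℝ) ≤ q R * (π * ρp * R^2 + 1) :=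
            mul_le_mul_of_nonneg_left h1 hq.le
        _ = ρp * a + q R := by rw [mul_add, h2, mul_one]
  have hlog : Tendsto (fun R : ℝ => (nR R : ℝ) * Real.log (1 - q R)) atTop
      (nhds (-(ρp * a))) := by
    have hlo : Tendsto (fun R : ℝ => (-(q R * (nR R : ℝ))) * (1 - q R)⁻¹) atTop
        (nhds (-(ρp * a))) := by
      have h1 : Tendsto (fun R : ℝ => (1 - q R)⁻¹) atTop (nhds 1) := by
        have := ((tendsto_const_nhds :
          Tendsto (fun _ : ℝ => (1:ℝ)) atTop (nhds 1)).sub hq0).inv₀ (by norm_num)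
        simpa using this
      have := (hden.neg).mul h1
      simpa using this
    have hhi : Tendsto (fun R : ℝ => -(q R * (nR R : ℝ))) atTop (nhds (-(ρp * a))) :=
      hden.neg
    refine tendsto_of_tendsto_of_tendsto_of_le_of_le' hlo hhi ?_ ?_
    · filter_upwards [hqpos, hqlt1] with R h0 h1
      have hpos : 0 < 1 - q R := by linarith
      have hlb : -(q R) * (1 - q R)⁻¹ ≤ Real.log (1 - q R) := by
        have h := Real.log_le_sub_one_of_pos (inv_pos.2 hpos)
        rw [Real.log_inv] at h
        have heq : (1 - q R)⁻¹ - 1 = q R * (1 - q R)⁻¹ := by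
          field_simp
          ring
        nlinarith
      calc (-(q R * (nR R : ℝ))) * (1 - q R)⁻¹
          = (nR R : ℝ) * (-(q R) * (1 - q R)⁻¹) := by ring
        _ ≤ (nR R : ℝ) * Real.log (1 - q R) :=
            mul_le_mul_of_nonneg_left hlb (Nat.cast_nonneg _)
    · filter_upwards [hqpos, hqlt1] with R h0 h1
      have hpos : 0 < 1 - q R := by linarith
      have hub : Real.log (1 - q R) ≤ -(q R) := by
        have h := Real.log_le_sub_one_of_pos hpos
        linarith
      calc (nR R : ℝ) * Real.log (1 - q R) ≤ (nR R : ℝ) * (-(q R)) :=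
            mul_le_mul_of_nonneg_left hub (Nat.cast_nonneg _)
        _ = -(q R * (nR R : ℝ)) := by ring
  have hpow : Tendsto (fun R : ℝ => (1 - q R)^(nR R)) atTop
      (nhds (Real.exp (-(ρp * a)))) := by
    have hcont := (Real.continuous_exp.tendsto _).comp hlog
    refine Tendsto.congr' ?_ hcont
    filter_upwards [hqpos, hqlt1] with R h0 h1
    have hpos : 0 < 1 - q R := by linarith
    have : (0:ℝ) < (1 - q R)^(nR R) := by positivity
    rw [Function.comp_apply, ← Real.log_pow, Real.exp_log this]
  have hne : ρp * a ≠ 0 := by positivity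
  have := ((tendsto_const_nhds :
    Tendsto (fun _ : ℝ => (1:ℝ)) atTop (nhds 1)).sub hpow).div hden hne
  exact this

/-- Fix `ρ_p > 0` and `a > 0`.  For each `R > 0` with `πR² ≥ a` let
`n_R = ⌈π ρ_p R²⌉`, `S_R` a Borel subset of the closed disk `B(0,R)` of measure `a`,
`X_2, …, X_{n_R}` i.i.d. uniform on `B(0,R)` and `M_1, …, M_{n_R}` i.i.d. uniform on
`[0,1]` independent of the positions (pairs `(X_i, M_i)` i.i.d. with product law).  Then
`Pr(M_1 < M_j for every j ∈ {2,…,n_R} with X_j ∈ S_R) → (1 − e^{−ρ_p a})/(ρ_p a)` as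
`R → ∞`.  (Index `0` plays the role of index `1` in the informal statement.) -/
theorem stmt16 (ρp a : ℝ) (hρp : 0 < ρp) (ha : 0 < a)
    (nR : ℝ → ℕ) (hnR : ∀ R : ℝ, nR R = ⌈π * ρp * R ^ 2⌉₊)
    (S : ℝ → Set (EuclideanSpace ℝ (Fin 2)))
    (hSmeas : ∀ R : ℝ, 0 < R → a ≤ π * R ^ 2 → MeasurableSet (S R))
    (hSsub : ∀ R : ℝ, 0 < R → a ≤ π * R ^ 2 → S R ⊆ Metric.closedBall 0 R)
    (hSvol : ∀ R : ℝ, 0 < R → a ≤ π * R ^ 2 → (volume (S R)).toReal = a)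
    (Ω : ℝ → Type) [∀ R, MeasurableSpace (Ω R)]
    (P : (R : ℝ) → Measure (Ω R)) (hprob : ∀ R, IsProbabilityMeasure (P R))
    (X : (R : ℝ) → Fin (nR R) → Ω R → EuclideanSpace ℝ (Fin 2))
    (M : (R : ℝ) → Fin (nR R) → Ω R → ℝ)
    (hmeasX : ∀ R i, Measurable (X R i)) (hmeasM : ∀ R i, Measurable (M R i))
    (hindep : ∀ R : ℝ, 0 < R → a ≤ π * R ^ 2 →
      iIndepFun
        (fun i : Fin (nR R) => fun ω => (X R i ω, M R i ω)) (P R))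
    (hlaw : ∀ (R : ℝ), 0 < R → a ≤ π * R ^ 2 → ∀ i : Fin (nR R),
      (P R).map (fun ω => (X R i ω, M R i ω)) = (unifDisk R).prod unifUnit) :
    Tendsto
      (fun R : ℝ =>
        if h0 : 0 < nR R then
          ((P R) {ω | ∀ j : Fin (nR R), j ≠ ⟨0, h0⟩ → X R j ω ∈ S R →
            M R ⟨0, h0⟩ ω < M R j ω}).toReal
        else 0)
      atTop (nhds ((1 - Real.exp (-(ρp * a))) / (ρp * a))) := by
  refine Tendsto.congr' ?_ (limit_part ρp a hρp ha nR hnR)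
  filter_upwards [eventually_ge_atTop (max 1 (Real.sqrt (a/π)) + 1)] with R hRge
  have hR1 : (1:ℝ) ≤ R := by
    have := le_max_left 1 (Real.sqrt (a/π)); linarith
  have hR0 : 0 < R := by linarith
  have hsq : Real.sqrt (a/π) ≤ R := by
    have := le_max_right 1 (Real.sqrt (a/π)); linarith
  have hRa : a ≤ π * R ^ 2 := by
    have h1 : a/π ≤ R^2 := by
      have h2 : Real.sqrt (a/π) ^ 2 ≤ R ^ 2 :=
        pow_le_pow_left₀ (Real.sqrt_nonneg _) hsq 2
      rwa [Real.sq_sqrt (by positivity)] at h2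
    rw [div_le_iff₀ pi_pos] at h1
    linarith [h1]
  have hpos : 0 < nR R := by
    rw [hnR]; exact Nat.ceil_pos.mpr (by positivity)
  rw [dif_pos hpos]
  haveI := hprob R
  haveI := unifDisk_prob R hR0
  have hP := key (P R) (unifDisk R) (S R) (hSmeas R hR0 hRa) hpos (X R) (M R)
    (hmeasX R) (hmeasM R) (hindep R hR0 hRa) (hlaw R hR0 hRa)
  rw [hP, unifDisk_apply R hR0 (S R) (hSmeas R hR0 hRa) (hSsub R hR0 hRa) ha
    (hSvol R hR0 hRa)]
  set qv : ℝ := a/(π*R^2) with hqv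
  have hq0 : 0 < qv := by rw [hqv]; positivity
  have hq1 : qv ≤ 1 := by
    rw [hqv, div_le_one (by positivity)]; linarith [hRa]
  rw [lint_eval qv hq0 hq1 (nR R - 1)]
  have hsn : (nR R - 1) + 1 = nR R := Nat.succ_pred_eq_of_pos hpos
  have hcn : ((nR R - 1 : ℕ):ℝ) + 1 = (nR R : ℝ) := by
    rw [Nat.cast_sub hpos]; ring
  rw [hsn, hcn]
  rw [ENNReal.toReal_ofReal]
  have hple : (1 - qv)^(nR R) ≤ 1 := pow_le_one₀ (by linarith) (by linarith)
  exact div_nonneg (by linarith) (by positivity)
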